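/- For all finite simple graphs G and H, the vector chromatic number of their categorical product satisfies χ_v(G × H) = min{χ_v(G), χ_v(H)}. -/

import Mathlib

open Matrix Kronecker

noncomputable section VectorColoring

variable {V α β : Type*}

/-- A vector `t`-coloring of a graph `G`: vectors `p i` with `p i ⬝ᵥ p i = t - 1`
and `p i ⬝ᵥ p j ≤ -1` on edges. -/
def IsVecColoring [Fintype V] (G : SimpleGraph V) (t : ℝ) {d : ℕ}
    (p : V → Fin d → ℝ) : Prop :=
  (∀ i, p i ⬝ᵥ p i = t - 1) ∧ ∀ i j, G.Adj i j → p i ⬝ᵥ p j ≤ -1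

/-- The vector chromatic number: the least `t ≥ 1` admitting a vector `t`-coloring. -/
def vecChrom [Fintype V] (G : SimpleGraph V) : ℝ :=
  sInf {t : ℝ | 1 ≤ t ∧ ∃ (d : ℕ) (p : V → Fin d → ℝ), IsVecColoring G t p}

/-- A strict vector `t`-coloring: `p i ⬝ᵥ p j = -1` on edges. -/
def IsStrictVecColoring [Fintype V] (G : SimpleGraph V) (t : ℝ) {d : ℕ}
    (p : V → Fin d → ℝ) : Prop :=
  (∀ i, p i ⬝ᵥ p i = t - 1) ∧ ∀ i j, G.Adj i j → p i ⬝ᵥ p j = -1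

/-- The strict vector chromatic number. -/
def strictVecChrom [Fintype V] (G : SimpleGraph V) : ℝ :=
  sInf {t : ℝ | 1 ≤ t ∧ ∃ (d : ℕ) (p : V → Fin d → ℝ), IsStrictVecColoring G t p}

/-- The Gram matrix of a family of vectors. -/
def gramMat {d : ℕ} (p : V → Fin d → ℝ) : Matrix V V ℝ :=
  Matrix.of fun i j => p i ⬝ᵥ p j

/-- `M` is the Gram matrix of an optimal vector coloring of `G`. -/
def IsOptGram [Fintype V] (G : SimpleGraph V) (M : Matrix V V ℝ) : Prop :=
  ∃ (d : ℕ) (p : V → Fin d → ℝ), IsVecColoring G (vecChrom G) p ∧ M = gramMat p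

/-- `grk G = rk(G)`: the maximum rank of the Gram matrix of an optimal vector coloring. -/
def grk [Fintype V] (G : SimpleGraph V) : ℕ :=
  sSup {r : ℕ | ∃ M : Matrix V V ℝ, IsOptGram G M ∧ M.rank = r}

/-- The categorical (tensor) product of graphs. -/
def catProd (G : SimpleGraph α) (H : SimpleGraph β) : SimpleGraph (α × β) where
  Adj x y := G.Adj x.1 y.1 ∧ H.Adj x.2 y.2
  symm := ⟨by intro x y hxy; exact ⟨hxy.1.symm, hxy.2.symm⟩⟩
  loopless := ⟨by intro x hx; exact G.loopless.irrefl x.1 hx.1⟩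

/-- A feasible dual solution for `vecChrom G`. -/
def IsDualSol [Fintype V] (G : SimpleGraph V) (B : Matrix V V ℝ) : Prop :=
  B.PosSemidef ∧ (∀ i j, i ≠ j → ¬ G.Adj i j → B i j = 0) ∧
    (∀ i j, 0 ≤ B i j) ∧ B.trace = 1

/-- An optimal dual solution for `vecChrom G`: feasible with objective value `vecChrom G`. -/
def IsOptDual [Fintype V] (G : SimpleGraph V) (B : Matrix V V ℝ) : Prop :=
  IsDualSol G B ∧ (∑ i, ∑ j, B i j) = vecChrom G

/-- The all-ones matrix `J`. -/
def allOnes (γ : Type*) : Matrix γ γ ℝ :=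
  Matrix.of fun _ _ => 1

/-- The graph `G(B)` of a (symmetric) matrix `B`: distinct `i, j` adjacent iff `B i j ≠ 0`. -/
def matGraph (B : Matrix V V ℝ) : SimpleGraph V where
  Adj i j := i ≠ j ∧ B i j ≠ 0 ∧ B j i ≠ 0
  symm := ⟨by intro i j hij; exact ⟨hij.1.symm, hij.2.2, hij.2.1⟩⟩
  loopless := ⟨by intro i hi; exact hi.1 rfl⟩

/-- The spanning subgraph `G^p` of edges tight in the vector coloring `p`. -/
def tightSub [Fintype V] (G : SimpleGraph V) {d : ℕ} (p : V → Fin d → ℝ) :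
    SimpleGraph V where
  Adj i j := G.Adj i j ∧ p i ⬝ᵥ p j = -1
  symm := ⟨by
    intro i j hij
    exact ⟨hij.1.symm, by rw [dotProduct_comm]; exact hij.2⟩⟩
  loopless := ⟨by intro i hi; exact G.loopless.irrefl i hi.1⟩

/-- The skeleton `G^sk`: the spanning subgraph of edges tight in every optimal
vector coloring. -/
def skeleton [Fintype V] (G : SimpleGraph V) : SimpleGraph V where
  Adj i j := G.Adj i j ∧ ∀ (d : ℕ) (p : V → Fin d → ℝ),
      IsVecColoring G (vecChrom G) p → p i ⬝ᵥ p j = -1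
  symm := ⟨by
    intro i j hij
    refine ⟨hij.1.symm, fun d p hp => ?_⟩
    rw [dotProduct_comm]
    exact hij.2 d p hp⟩
  loopless := ⟨by intro i hi; exact G.loopless.irrefl i hi.1⟩

/-- `i` is neighborly in the vector coloring `p`: `-p i` lies in the conical hull of
the vectors of the `∼_p`-neighbours of `i`. -/
def NeighborlyIn [Fintype V] (G : SimpleGraph V) {d : ℕ} (p : V → Fin d → ℝ)
    (i : V) : Prop :=
  ∃ c : V → ℝ, (∀ j, 0 ≤ c j) ∧ (∀ j, c j ≠ 0 → G.Adj i j ∧ p i ⬝ᵥ p j = -1) ∧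
    -p i = ∑ j, c j • p j

/-- `i` is neighborly: neighborly in every optimal vector coloring. -/
def Neighborly [Fintype V] (G : SimpleGraph V) (i : V) : Prop :=
  ∀ (d : ℕ) (p : V → Fin d → ℝ), IsVecColoring G (vecChrom G) p → NeighborlyIn G p i

/-- `i →_p j`: `-p i = ∑ α_l • p l` over `∼_p`-neighbours `l` of `i`, with `α_j > 0`. -/
def ArrowIn [Fintype V] (G : SimpleGraph V) {d : ℕ} (p : V → Fin d → ℝ)
    (i j : V) : Prop :=
  ∃ c : V → ℝ, (∀ l, 0 ≤ c l) ∧ (∀ l, c l ≠ 0 → G.Adj i l ∧ p i ⬝ᵥ p l = -1) ∧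
    0 < c j ∧ -p i = ∑ l, c l • p l

/-- `μ` is an eigenvalue of `M`. -/
def IsEigenvalue [Fintype V] (M : Matrix V V ℝ) (μ : ℝ) : Prop :=
  ∃ v : V → ℝ, v ≠ 0 ∧ M *ᵥ v = μ • v

/-- `lam` is the largest eigenvalue of `M`. -/
def IsMaxEigenvalue [Fintype V] (M : Matrix V V ℝ) (lam : ℝ) : Prop :=
  IsGreatest {μ : ℝ | IsEigenvalue M μ} lam

/-- `lam` is the smallest eigenvalue of `M`. -/
def IsMinEigenvalue [Fintype V] (M : Matrix V V ℝ) (lam : ℝ) : Prop :=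
  IsLeast {μ : ℝ | IsEigenvalue M μ} lam

/-- The eigenspace of `M` for `μ`. -/
def eigSpace [Fintype V] (M : Matrix V V ℝ) (μ : ℝ) : Submodule ℝ (V → ℝ) :=
  LinearMap.ker (M.mulVecLin - μ • (LinearMap.id : (V → ℝ) →ₗ[ℝ] V → ℝ))

/-- `W` is (the Gram matrix of) a convex combination of vector colorings of `G × H`
induced by `G` and by `H`: `W = a • (M ⊗ J) + b • (J ⊗ N)`. -/
def IsConvexCombInduced [Fintype α] [Fintype β] (G : SimpleGraph α) (H : SimpleGraph β)
    (W : Matrix (α × β) (α × β) ℝ) : Prop :=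
  ∃ (a b : ℝ) (M : Matrix α α ℝ) (N : Matrix β β ℝ),
    0 ≤ a ∧ 0 ≤ b ∧ a + b = 1 ∧ IsOptGram G M ∧ IsOptGram H N ∧
    W = a • (M ⊗ₖ allOnes β) + b • (allOnes α ⊗ₖ N)

end VectorColoring


section HedetAux
open Matrix Finset Kronecker
variable {α β : Type*}


private lemma dotProduct_mulVec_eq_sum [Fintype α] (M : Matrix α α ℝ) (x : α → ℝ) :
    x ⬝ᵥ M *ᵥ x = ∑ i, ∑ j, M i j * x i * x j := by
  simp only [dotProduct, mulVec, Finset.mul_sum]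
  exact Finset.sum_congr rfl fun i _ => Finset.sum_congr rfl fun j _ => by ring

private lemma posSemidef_of_quad [Fintype α] {M : Matrix α α ℝ}
    (h1 : ∀ i j, M i j = M j i)
    (h2 : ∀ x : α → ℝ, 0 ≤ ∑ i, ∑ j, M i j * x i * x j) : M.PosSemidef := by
  refine Matrix.PosSemidef.of_dotProduct_mulVec_nonneg ?_ ?_
  · ext i j
    simp only [conjTranspose_apply, star_trivial]
    exact h1 j i
  · intro x
    simpa [dotProduct_mulVec_eq_sum] using h2 x

private lemma psd_quad [Fintype α] {M : Matrix α α ℝ} (h : M.PosSemidef) (x : α → ℝ) :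
    0 ≤ ∑ i, ∑ j, M i j * x i * x j := by
  simpa [dotProduct_mulVec_eq_sum] using h.dotProduct_mulVec_nonneg x

private lemma psd_symm [Fintype α] {M : Matrix α α ℝ} (h : M.IsHermitian) (i j : α) :
    M i j = M j i :=
  (by simpa [conjTranspose_apply] using congrFun (congrFun h i) j : M j i = M i j).symm

private lemma sum_sq_form {ι : Type*} [Fintype ι] [Fintype α] (g : ι → α → ℝ) (x : α → ℝ) :
    ∑ i, ∑ j, (∑ k, g k i * g k j) * x i * x j = ∑ k, (∑ i, g k i * x i)^2 := by
  have h1 : ∀ i : α, ∑ j, (∑ k, g k i * g k j) * x i * x j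
      = ∑ k, ∑ j, (g k i * x i) * (g k j * x j) := by
    intro i
    rw [← Finset.sum_comm]
    refine Finset.sum_congr rfl fun j _ => ?_
    rw [Finset.sum_mul, Finset.sum_mul]
    exact Finset.sum_congr rfl fun k _ => by ring
  calc ∑ i, ∑ j, (∑ k, g k i * g k j) * x i * x j
      = ∑ i, ∑ k, ∑ j, (g k i * x i) * (g k j * x j) := Finset.sum_congr rfl fun i _ => h1 i
    _ = ∑ k, ∑ i, ∑ j, (g k i * x i) * (g k j * x j) := Finset.sum_comm
    _ = ∑ k, (∑ i, g k i * x i)^2 := by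
        refine Finset.sum_congr rfl fun k _ => ?_
        rw [sq, Finset.sum_mul_sum]

private lemma psd_two [Fintype α] [DecidableEq α] {M : Matrix α α ℝ} (hM : M.PosSemidef)
    (i j : α) (a b : ℝ) (hij : i ≠ j) :
    0 ≤ a^2 * M i i + a*b*(M i j + M j i) + b^2 * M j j := by
  have h := hM.dotProduct_mulVec_nonneg ((Pi.single i a : α → ℝ) + (Pi.single j b : α → ℝ))
  simp only [star_trivial, mulVec_add, dotProduct_add, add_dotProduct,
    Matrix.mulVec_single, dotProduct, Pi.add_apply, Pi.single_apply, ite_mul, zero_mul,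
    Pi.smul_apply, MulOpposite.smul_eq_mul_unop, MulOpposite.unop_op, Matrix.col_apply,
    add_mul, mul_add, Finset.sum_add_distrib, Finset.sum_ite_eq', Finset.mem_univ, if_true] at h
  nlinarith [h]

private lemma psd_diag_nonneg [Fintype α] {M : Matrix α α ℝ} (hM : M.PosSemidef) (i : α) :
    0 ≤ M i i := by
  classical
  have h := hM.dotProduct_mulVec_nonneg (Pi.single i 1 : α → ℝ)
  simp only [star_trivial, Matrix.mulVec_single, dotProduct, Pi.single_apply, ite_mul, zero_mul,
    Finset.sum_ite_eq', Finset.mem_univ, if_true] at h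
  simpa using h

private lemma psd_entry_bound [Fintype α] {M : Matrix α α ℝ} (hM : M.PosSemidef) (i j : α) :
    |M i j| ≤ (M i i + M j j) / 2 := by
  classical
  rcases eq_or_ne i j with rfl | hij
  · have := psd_diag_nonneg hM i
    rw [abs_of_nonneg this]; linarith
  · have h1 := psd_two hM i j 1 1 hij
    have h2 := psd_two hM i j 1 (-1) hij
    have hsym : M j i = M i j := psd_symm hM.1 j i
    rw [abs_le]; constructor <;> nlinarith

private lemma psd_smul [Fintype α] {M : Matrix α α ℝ} {c : ℝ} (hc : 0 ≤ c)
    (hM : M.PosSemidef) : (c • M).PosSemidef := by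
  refine posSemidef_of_quad (fun i j => ?_) fun x => ?_
  · simp only [Matrix.smul_apply, smul_eq_mul, psd_symm hM.1 i j]
  · have : ∑ i, ∑ j, (c • M) i j * x i * x j = c * ∑ i, ∑ j, M i j * x i * x j := by
      rw [Finset.mul_sum]
      refine Finset.sum_congr rfl fun i _ => ?_
      rw [Finset.mul_sum]
      exact Finset.sum_congr rfl fun j _ => by simp [Matrix.smul_apply]; ring
    rw [this]
    exact mul_nonneg hc (psd_quad hM x)

private lemma gram_posSemidef [Fintype α] {d : ℕ} (p : α → Fin d → ℝ) :
    (Matrix.of fun i j => p i ⬝ᵥ p j : Matrix α α ℝ).PosSemidef := by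
  refine posSemidef_of_quad (fun i j => by simp only [Matrix.of_apply]; exact dotProduct_comm _ _)
    fun x => ?_
  have : ∑ i, ∑ j, (Matrix.of fun i j => p i ⬝ᵥ p j : Matrix α α ℝ) i j * x i * x j
      = ∑ k, (∑ i, p i k * x i)^2 := by
    simpa [dotProduct] using sum_sq_form (fun (k : Fin d) (i : α) => p i k) x
  rw [this]
  positivity

private lemma psd_eq_ct_mul_self [Fintype α] {M : Matrix α α ℝ} (hM : M.PosSemidef) :
    ∃ B : Matrix α α ℝ, M = Bᴴ * B := by
  classical
  open scoped MatrixOrder in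
  exact ⟨CFC.sqrt M, by
    rw [(CFC.sqrt_nonneg M).posSemidef.1.eq, CFC.sqrt_mul_sqrt_self M hM.nonneg]⟩

private lemma psd_exists_gram [Fintype α] {M : Matrix α α ℝ} (hM : M.PosSemidef) :
    ∃ p : α → Fin (Fintype.card α) → ℝ, ∀ i j, p i ⬝ᵥ p j = M i j := by
  classical
  obtain ⟨B, hB⟩ := psd_eq_ct_mul_self hM
  let e := Fintype.equivFin α
  refine ⟨fun i k => B (e.symm k) i, fun i j => ?_⟩
  rw [hB]
  simp only [Matrix.mul_apply, Matrix.conjTranspose_apply, star_trivial, dotProduct]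
  exact Fintype.sum_equiv e.symm _ _ fun k => rfl

private lemma schur_psd [Fintype α] {B M : Matrix α α ℝ} (hB : B.PosSemidef)
    (hM : M.PosSemidef) : (Matrix.of fun i j => B i j * M i j : Matrix α α ℝ).PosSemidef := by
  obtain ⟨P, hP⟩ := psd_eq_ct_mul_self hB
  obtain ⟨Q, hQ⟩ := psd_eq_ct_mul_self hM
  refine posSemidef_of_quad (fun i j => by
    simp only [Matrix.of_apply, psd_symm hB.1 i j, psd_symm hM.1 i j]) fun x => ?_
  have key : ∀ i j : α, B i j * M i j = ∑ w : α × α, (P w.1 i * Q w.2 i) * (P w.1 j * Q w.2 j) := by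
    intro i j
    rw [Fintype.sum_prod_type, hP, hQ]
    simp only [Matrix.mul_apply, Matrix.conjTranspose_apply, star_trivial]
    rw [Finset.sum_mul_sum]
    exact Finset.sum_congr rfl fun k _ => Finset.sum_congr rfl fun l _ => by ring
  have : ∑ i, ∑ j, (Matrix.of fun i j => B i j * M i j : Matrix α α ℝ) i j * x i * x j
      = ∑ w : α × α, (∑ i, (P w.1 i * Q w.2 i) * x i)^2 := by
    rw [← sum_sq_form (fun (w : α × α) (i : α) => P w.1 i * Q w.2 i) x]
    exact Finset.sum_congr rfl fun i _ => Finset.sum_congr rfl fun j _ => by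
      simp only [Matrix.of_apply, key i j]
  rw [this]
  positivity

open Kronecker in
private lemma kron_psd [Fintype α] [Fintype β] {A : Matrix α α ℝ} {C : Matrix β β ℝ}
    (hA : A.PosSemidef) (hC : C.PosSemidef) : (A ⊗ₖ C).PosSemidef := by
  obtain ⟨P, hP⟩ := psd_eq_ct_mul_self hA
  obtain ⟨Q, hQ⟩ := psd_eq_ct_mul_self hC
  refine posSemidef_of_quad (fun u v => by
    simp only [Matrix.kroneckerMap_apply, psd_symm hA.1 u.1 v.1, psd_symm hC.1 u.2 v.2])
    fun x => ?_
  have key : ∀ u v : α × β, (A ⊗ₖ C) u v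
      = ∑ w : α × β, (P w.1 u.1 * Q w.2 u.2) * (P w.1 v.1 * Q w.2 v.2) := by
    intro u v
    rw [Fintype.sum_prod_type, Matrix.kroneckerMap_apply, hP, hQ]
    simp only [Matrix.mul_apply, Matrix.conjTranspose_apply, star_trivial]
    rw [Finset.sum_mul_sum]
    exact Finset.sum_congr rfl fun k _ => Finset.sum_congr rfl fun l _ => by ring
  have : ∑ u, ∑ v, (A ⊗ₖ C) u v * x u * x v
      = ∑ w : α × β, (∑ u, (P w.1 u.1 * Q w.2 u.2) * x u)^2 := by
    rw [← sum_sq_form (fun (w : α × β) (u : α × β) => P w.1 u.1 * Q w.2 u.2) x]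
    exact Finset.sum_congr rfl fun u _ => Finset.sum_congr rfl fun v _ => by
      rw [key u v]
  rw [this]
  positivity

private def colS [Fintype α] (G : SimpleGraph α) : Set ℝ :=
  {t : ℝ | 1 ≤ t ∧ ∃ (d : ℕ) (p : α → Fin d → ℝ), IsVecColoring G t p}

private lemma vecChrom_eq_sInf [Fintype α] (G : SimpleGraph α) :
    vecChrom G = sInf (colS G) := rfl

private lemma colS_bddBelow [Fintype α] (G : SimpleGraph α) : BddBelow (colS G) :=
  ⟨1, fun _ ht => ht.1⟩

private lemma colS_nonempty [Fintype α] (G : SimpleGraph α) : (colS G).Nonempty := by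
  classical
  rcases eq_or_ne (Fintype.card α) 0 with h0 | h0
  · have hE : IsEmpty α := Fintype.card_eq_zero_iff.mp h0
    exact ⟨1, le_refl 1, 0, fun _ _ => 0, fun i => hE.elim i, fun i _ _ => hE.elim i⟩
  · set n := Fintype.card α with hn
    have hn1 : 1 ≤ n := Nat.one_le_iff_ne_zero.mpr h0
    set e := Fintype.equivFin α
    set c : ℝ := (n : ℝ) + 1 with hc
    refine ⟨(n : ℝ)^2 + n, ?_, n, fun i k => (if e i = k then c else 0) - 1, ?_, ?_⟩
    · have : (1:ℝ) ≤ (n:ℝ) := by exact_mod_cast hn1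
      nlinarith
    · intro i
      have : (fun i k => (if e i = k then c else 0) - 1) i ⬝ᵥ
          (fun i k => (if e i = k then c else 0) - 1) i
          = c^2 - c - c + n := by
        simp only [dotProduct, sub_mul, mul_sub, one_mul, mul_one, ite_mul, mul_ite,
          zero_mul, mul_zero, Finset.sum_sub_distrib]
        simp [Finset.sum_ite_eq', sq]
        rw [hn]; ring
      rw [this]; ring
    · intro i j hadj
      have hne : e i ≠ e j := fun h => G.ne_of_adj hadj (e.injective h)
      have : (fun i k => (if e i = k then c else 0) - 1) i ⬝ᵥ
          (fun i k => (if e i = k then c else 0) - 1) j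
          = 0 - c - c + n := by
        simp only [dotProduct, sub_mul, mul_sub, one_mul, mul_one, ite_mul, mul_ite,
          zero_mul, mul_zero, Finset.sum_sub_distrib]
        simp [Finset.sum_ite_eq', Finset.sum_ite_eq, hne, if_neg (hne ∘ Eq.symm)]
        rw [hn]; ring
      rw [this]
      have : (0:ℝ) ≤ (n:ℝ) := Nat.cast_nonneg n
      nlinarith

private lemma trace_eq [Fintype α] (B : Matrix α α ℝ) : B.trace = ∑ i, B i i := rfl

private lemma sum_split [Fintype α] [DecidableEq α] (F : α → α → ℝ) :
    ∑ i, ∑ j, F i j = (∑ i, F i i) + ∑ i, ∑ j ∈ Finset.univ.erase i, F i j := by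
  rw [← Finset.sum_add_distrib]
  exact Finset.sum_congr rfl fun i _ =>
    (Finset.add_sum_erase Finset.univ (fun j => F i j) (Finset.mem_univ i)).symm

private lemma psd_inner_gram_nonneg [Fintype α] {B : Matrix α α ℝ} (hB : B.PosSemidef)
    {d : ℕ} (p : α → Fin d → ℝ) : 0 ≤ ∑ i, ∑ j, B i j * (p i ⬝ᵥ p j) := by
  have h1 : ∑ i, ∑ j, B i j * (p i ⬝ᵥ p j)
      = ∑ k : Fin d, ∑ i, ∑ j, B i j * p i k * p j k :=
    calc ∑ i, ∑ j, B i j * (p i ⬝ᵥ p j)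
        = ∑ i, ∑ j, ∑ k : Fin d, B i j * p i k * p j k :=
          Finset.sum_congr rfl fun i _ => Finset.sum_congr rfl fun j _ => by
            simp only [dotProduct, Finset.mul_sum]
            exact Finset.sum_congr rfl fun k _ => by ring
      _ = ∑ i, ∑ k : Fin d, ∑ j, B i j * p i k * p j k :=
          Finset.sum_congr rfl fun i _ => Finset.sum_comm
      _ = ∑ k : Fin d, ∑ i, ∑ j, B i j * p i k * p j k := Finset.sum_comm
  rw [h1]
  exact Finset.sum_nonneg fun k _ => psd_quad hB (fun i => p i k)

private lemma weak_duality [Fintype α] [DecidableEq α] {G : SimpleGraph α} {B : Matrix α α ℝ}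
    (hB : IsDualSol G B) {t : ℝ} {d : ℕ} {p : α → Fin d → ℝ} (hp : IsVecColoring G t p) :
    ∑ i, ∑ j, B i j ≤ t := by
  obtain ⟨hpsd, hsupp, hnn, htr⟩ := hB
  have htr' : ∑ i, B i i = 1 := by rw [← trace_eq]; exact htr
  have h0 : 0 ≤ ∑ i, ∑ j, B i j * (p i ⬝ᵥ p j) := psd_inner_gram_nonneg hpsd p
  have hsplit := sum_split (fun i j => B i j * (p i ⬝ᵥ p j))
  have hsplitB := sum_split (fun i j => B i j)
  have hdiag : ∑ i, B i i * (p i ⬝ᵥ p i) = t - 1 := by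
    have : ∀ i ∈ Finset.univ, B i i * (p i ⬝ᵥ p i) = B i i * (t - 1) := fun i _ => by
      rw [hp.1 i]
    rw [Finset.sum_congr rfl this, ← Finset.sum_mul, htr', one_mul]
  have hoff : ∑ i, ∑ j ∈ Finset.univ.erase i, B i j * (p i ⬝ᵥ p j)
      ≤ ∑ i, ∑ j ∈ Finset.univ.erase i, -(B i j) := by
    refine Finset.sum_le_sum fun i _ => Finset.sum_le_sum fun j hj => ?_
    have hne : j ≠ i := Finset.ne_of_mem_erase hj
    rcases eq_or_ne (B i j) 0 with h | h
    · simp [h]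
    · have hadj : G.Adj i j := by
        by_contra hna
        exact h (hsupp i j (Ne.symm hne) hna)
      have h2 := hp.2 i j hadj
      nlinarith [hnn i j]
  have hneg : ∑ i, ∑ j ∈ Finset.univ.erase i, -(B i j)
      = -∑ i, ∑ j ∈ Finset.univ.erase i, B i j := by
    simp [Finset.sum_neg_distrib]
  linarith

private lemma one_le_vecChrom [Fintype α] (G : SimpleGraph α) : 1 ≤ vecChrom G :=
  le_csInf (colS_nonempty G) fun _ ht => ht.1

private lemma colS_subset_prod_left [Fintype α] [Fintype β] (G : SimpleGraph α)
    (H : SimpleGraph β) : colS G ⊆ colS (catProd G H) := by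
  rintro t ⟨ht1, d, p, hdiag, hadj⟩
  exact ⟨ht1, d, fun u => p u.1, fun u => hdiag u.1, fun u v huv => hadj u.1 v.1 huv.1⟩

private lemma colS_subset_prod_right [Fintype α] [Fintype β] (G : SimpleGraph α)
    (H : SimpleGraph β) : colS H ⊆ colS (catProd G H) := by
  rintro t ⟨ht1, d, p, hdiag, hadj⟩
  exact ⟨ht1, d, fun u => p u.2, fun u => hdiag u.2, fun u v huv => hadj u.2 v.2 huv.2⟩

private lemma easy_direction [Fintype α] [Fintype β] (G : SimpleGraph α) (H : SimpleGraph β) :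
    vecChrom (catProd G H) ≤ min (vecChrom G) (vecChrom H) := by
  rw [le_min_iff]
  constructor
  · exact csInf_le_csInf (colS_bddBelow _) (colS_nonempty G) (colS_subset_prod_left G H)
  · exact csInf_le_csInf (colS_bddBelow _) (colS_nonempty H) (colS_subset_prod_right G H)

private lemma vecChrom_mem_colS [Fintype α] (G : SimpleGraph α) : vecChrom G ∈ colS G := by
  classical
  set s := vecChrom G with hs
  have hs1 : 1 ≤ s := one_le_vecChrom G
  set 𝒦 : Set (ℝ × Matrix α α ℝ) := {z | z.2.PosSemidef ∧ (∀ i, z.2 i i = z.1 - 1) ∧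
    (∀ i j, G.Adj i j → z.2 i j ≤ -1) ∧ 1 ≤ z.1} with h𝒦
  have hSK : ∀ t : ℝ, t ∈ colS G ↔ ∃ M, (t, M) ∈ 𝒦 := by
    intro t
    constructor
    · rintro ⟨ht1, d, p, hdiag, hadj⟩
      exact ⟨Matrix.of fun i j => p i ⬝ᵥ p j, gram_posSemidef p, fun i => hdiag i,
        fun i j h => hadj i j h, ht1⟩
    · rintro ⟨M, hpsd, hdiag, hadj, ht1⟩
      obtain ⟨p, hp⟩ := psd_exists_gram hpsd
      exact ⟨ht1, _, p, fun i => by rw [hp]; exact hdiag i,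
        fun i j h => by rw [hp]; exact hadj i j h⟩
  set Box : Set (Matrix α α ℝ) := {M | ∀ i j, M i j ∈ Set.Icc (-(s+1)) (s+1)} with hBox
  set K : Set (ℝ × Matrix α α ℝ) := 𝒦 ∩ (Set.Icc 1 (s+1) ×ˢ Box) with hK
  have hmemK : ∀ t ∈ colS G, t ≤ s + 1 → (∃ M, (t, M) ∈ K) := by
    intro t ht htle
    obtain ⟨M, hM⟩ := (hSK t).mp ht
    refine ⟨M, hM, ⟨ht.1, htle⟩, fun i j => ?_⟩
    have hb := psd_entry_bound hM.1 i j
    rw [hM.2.1 i, hM.2.1 j, abs_le] at hb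
    rw [Set.mem_Icc]
    constructor <;> nlinarith [ht.1]
  have cont : ∀ i j : α, Continuous fun z : ℝ × Matrix α α ℝ => z.2 i j := fun i j =>
    (continuous_apply j).comp ((continuous_apply i).comp continuous_snd)
  have hclosed𝒦 : IsClosed 𝒦 := by
    have he : 𝒦 = ({z : ℝ × Matrix α α ℝ | ∀ i j, z.2 i j = z.2 j i}
        ∩ {z | ∀ x : α → ℝ, 0 ≤ ∑ i, ∑ j, z.2 i j * x i * x j})
        ∩ ({z | ∀ i, z.2 i i = z.1 - 1}
        ∩ ({z | ∀ i j, G.Adj i j → z.2 i j ≤ -1} ∩ {z | 1 ≤ z.1})) := by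
      ext z
      simp only [h𝒦, Set.mem_setOf_eq, Set.mem_inter_iff]
      constructor
      · rintro ⟨h1, h2, h3, h4⟩
        exact ⟨⟨fun i j => psd_symm h1.1 i j, psd_quad h1⟩, h2, h3, h4⟩
      · rintro ⟨⟨h1a, h1b⟩, h2, h3, h4⟩
        exact ⟨posSemidef_of_quad h1a h1b, h2, h3, h4⟩
    rw [he]
    refine IsClosed.inter (IsClosed.inter ?_ ?_) (IsClosed.inter ?_ (IsClosed.inter ?_ ?_))
    · have : {z : ℝ × Matrix α α ℝ | ∀ i j, z.2 i j = z.2 j i}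
          = ⋂ i, ⋂ j, {z : ℝ × Matrix α α ℝ | z.2 i j = z.2 j i} := by
        ext z; simp
      rw [this]
      exact isClosed_iInter fun i => isClosed_iInter fun j => isClosed_eq (cont i j) (cont j i)
    · have : {z : ℝ × Matrix α α ℝ | ∀ x : α → ℝ, 0 ≤ ∑ i, ∑ j, z.2 i j * x i * x j}
          = ⋂ x : α → ℝ, {z : ℝ × Matrix α α ℝ | 0 ≤ ∑ i, ∑ j, z.2 i j * x i * x j} := by
        ext z; simp
      rw [this]
      refine isClosed_iInter fun x => isClosed_le continuous_const ?_
      exact continuous_finset_sum _ fun i _ => continuous_finset_sum _ fun j _ =>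
        ((cont i j).mul continuous_const).mul continuous_const
    · have : {z : ℝ × Matrix α α ℝ | ∀ i, z.2 i i = z.1 - 1}
          = ⋂ i, {z : ℝ × Matrix α α ℝ | z.2 i i = z.1 - 1} := by ext z; simp
      rw [this]
      exact isClosed_iInter fun i =>
        isClosed_eq (cont i i) (continuous_fst.sub continuous_const)
    · have : {z : ℝ × Matrix α α ℝ | ∀ i j, G.Adj i j → z.2 i j ≤ -1}
          = ⋂ i, ⋂ j, {z : ℝ × Matrix α α ℝ | G.Adj i j → z.2 i j ≤ -1} := by ext z; simp
      rw [this]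
      refine isClosed_iInter fun i => isClosed_iInter fun j => ?_
      by_cases hadj : G.Adj i j
      · have : {z : ℝ × Matrix α α ℝ | G.Adj i j → z.2 i j ≤ -1}
            = {z : ℝ × Matrix α α ℝ | z.2 i j ≤ -1} := by ext z; simp [hadj]
        rw [this]
        exact isClosed_le (cont i j) continuous_const
      · have : {z : ℝ × Matrix α α ℝ | G.Adj i j → z.2 i j ≤ -1} = Set.univ := by
          ext z; simp [hadj]
        rw [this]
        exact isClosed_univ
    · exact isClosed_le continuous_const continuous_fst
  have hBoxeq : Box = Set.univ.pi fun _ : α => Set.univ.pi fun _ : α =>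
      Set.Icc (-(s+1)) (s+1) := by
    ext M
    simp only [hBox, Set.mem_setOf_eq]
    constructor
    · intro h
      exact fun i _ j _ => h i j
    · intro h i j
      exact h i (Set.mem_univ i) j (Set.mem_univ j)
  have hBoxcpt : IsCompact Box := by
    rw [hBoxeq]
    exact isCompact_univ_pi fun i => isCompact_univ_pi fun j => isCompact_Icc
  have hBoxclosed : IsClosed Box := by
    rw [hBoxeq]
    exact isClosed_set_pi fun i _ => isClosed_set_pi fun j _ => isClosed_Icc
  have hKclosed : IsClosed K := hclosed𝒦.inter (isClosed_Icc.prod hBoxclosed)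
  have hKcpt : IsCompact K :=
    (isCompact_Icc.prod hBoxcpt).of_isClosed_subset hKclosed Set.inter_subset_right
  obtain ⟨t₀, ht₀, ht₀lt⟩ := (csInf_lt_iff (colS_bddBelow G) (colS_nonempty G)).mp
    (show sInf (colS G) < s + 1 by rw [← vecChrom_eq_sInf, ← hs]; linarith)
  obtain ⟨M₀, hM₀⟩ := hmemK t₀ ht₀ ht₀lt.le
  set T : Set ℝ := Prod.fst '' K with hT
  have hTcpt : IsCompact T := hKcpt.image continuous_fst
  have hTne : T.Nonempty := ⟨t₀, (t₀, M₀), hM₀, rfl⟩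
  have hTsub : T ⊆ colS G := by
    rintro t ⟨z, hz, rfl⟩
    exact (hSK z.1).mpr ⟨z.2, hz.1⟩
  have htstar := hTcpt.sInf_mem hTne
  have hle1 : s ≤ sInf T := by
    rw [hs, vecChrom_eq_sInf]
    exact le_csInf hTne fun t ht => csInf_le (colS_bddBelow G) (hTsub ht)
  have hle2 : sInf T ≤ s := by
    by_contra hlt
    push_neg at hlt
    obtain ⟨t₁, ht₁, ht₁lt⟩ := (csInf_lt_iff (colS_bddBelow G) (colS_nonempty G)).mp
      (show sInf (colS G) < min (sInf T) (s+1) by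
        rw [← vecChrom_eq_sInf, ← hs, lt_min_iff]
        exact ⟨hlt, by linarith⟩)
    obtain ⟨M₁, hM₁⟩ := hmemK t₁ ht₁ (ht₁lt.le.trans (min_le_right _ _))
    have : sInf T ≤ t₁ := csInf_le hTcpt.bddBelow ⟨(t₁, M₁), hM₁, rfl⟩
    have := lt_of_le_of_lt this (lt_of_lt_of_le ht₁lt (min_le_left _ _))
    exact lt_irrefl _ this
  have : sInf T = s := le_antisymm hle2 hle1
  rw [← this]
  exact hTsub htstar


private lemma aux_le_zero {C v : ℝ} (hC : 0 ≤ C) (h : ∀ t : ℝ, 0 < t → t * v ≤ C) :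
    v ≤ 0 := by
  by_contra hv
  push_neg at hv
  have ht : (0:ℝ) < (C + 1) / v := by positivity
  have := h _ ht
  rw [div_mul_cancel₀ _ (ne_of_gt hv)] at this
  linarith

private lemma aux_lt_bound {a w C : ℝ} (h : ∀ t : ℝ, 0 < t → a + t * w < C) : a ≤ C := by
  rcases le_or_gt 0 w with hw | hw
  · have := h 1 one_pos
    nlinarith
  · by_contra hac
    push_neg at hac
    have hw0 : w ≠ 0 := ne_of_lt hw
    have ht : (0:ℝ) < (a - C) / (-2 * w) := by
      apply div_pos (by linarith) (by linarith)
    have h1 := h _ ht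
    have h2 : (a - C) / (-2 * w) * w = (C - a) / 2 := by
      field_simp
      ring
    rw [h2] at h1
    linarith

private lemma sum_erase_swap [Fintype α] [DecidableEq α] (F : α → α → ℝ) :
    ∑ i, ∑ j ∈ Finset.univ.erase i, F i j = ∑ i, ∑ j ∈ Finset.univ.erase i, F j i := by
  have h1 := sum_split F
  have h2 := sum_split (fun i j => F j i)
  have h3 : ∑ i, ∑ j, F j i = ∑ i, ∑ j, F i j := Finset.sum_comm
  linarith

private lemma exists_near_dual [Fintype α] [DecidableEq α] {G : SimpleGraph α}
    {δ : ℝ} (hδ : 0 < δ) (hδ' : δ < vecChrom G - 1) :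
    ∃ B, IsDualSol G B ∧ vecChrom G - δ ≤ ∑ i, ∑ j, B i j := by
  classical
  set s := vecChrom G with hsdef
  set U : Set (Matrix α α ℝ) := {A | ∃ M : Matrix α α ℝ, M.PosSemidef ∧
    (∀ i, M i i ≤ A i i) ∧ ∀ i j, G.Adj i j → M i j ≤ A i j} with hU
  have hUconv : Convex ℝ U := by
    rintro A ⟨M, hM, hMd, hMe⟩ A' ⟨M', hM', hMd', hMe'⟩ a b ha hb hab
    refine ⟨a • M + b • M', (psd_smul ha hM).add (psd_smul hb hM'), fun i => ?_, fun i j h => ?_⟩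
    · simp only [Matrix.add_apply, Matrix.smul_apply, smul_eq_mul]
      exact add_le_add (mul_le_mul_of_nonneg_left (hMd i) ha)
        (mul_le_mul_of_nonneg_left (hMd' i) hb)
    · simp only [Matrix.add_apply, Matrix.smul_apply, smul_eq_mul]
      exact add_le_add (mul_le_mul_of_nonneg_left (hMe i j h) ha)
        (mul_le_mul_of_nonneg_left (hMe' i j h) hb)
  have hzero : (0 : Matrix α α ℝ) ∈ U :=
    ⟨0, Matrix.PosSemidef.zero, fun i => le_refl _, fun i j _ => le_refl _⟩
  have hup : ∀ A ∈ U, ∀ A' : Matrix α α ℝ, (∀ i j, A i j ≤ A' i j) → A' ∈ U := by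
    rintro A ⟨M, h1, h2, h3⟩ A' hle
    exact ⟨M, h1, fun i => (h2 i).trans (hle i i), fun i j h => (h3 i j h).trans (hle i j)⟩
  have contM : ∀ i j : α, Continuous fun A : Matrix α α ℝ => A i j := fun i j =>
    (continuous_apply j).comp (continuous_apply i)
  have hint : ∀ A ∈ U, ∀ t : ℝ, 0 < t → A + t • allOnes α ∈ interior U := by
    intro A hA t ht
    rw [mem_interior]
    refine ⟨{A' | ∀ i j, A i j < A' i j}, fun A'' hA'' => hup A hA A'' fun i j => (hA'' i j).le,
      ?_, ?_⟩
    · have : {A' : Matrix α α ℝ | ∀ i j, A i j < A' i j}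
          = ⋂ i, ⋂ j, {A' : Matrix α α ℝ | A i j < A' i j} := by ext z; simp
      rw [this]
      exact isOpen_iInter_of_finite fun i => isOpen_iInter_of_finite fun j =>
        isOpen_lt continuous_const (contM i j)
    · intro i j
      simp only [Set.mem_setOf_eq, Matrix.add_apply, Matrix.smul_apply, allOnes,
        Matrix.of_apply, smul_eq_mul, mul_one]
      linarith
  set X : Matrix α α ℝ := Matrix.of fun i j =>
    if i = j then s - 1 - δ else if G.Adj i j then -1 else 0 with hX
  have hXnot : X ∉ U := by
    rintro ⟨M, hM, hMd, hMe⟩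
    have h1le : (1:ℝ) ≤ s - δ := by linarith
    have hMd' : ∀ i, M i i ≤ s - 1 - δ := by
      intro i
      have := hMd i
      simpa [hX] using this
    set M' := M + Matrix.diagonal (fun i => (s - 1 - δ) - M i i) with hM'
    have hM'psd : M'.PosSemidef := hM.add (Matrix.posSemidef_diagonal_iff.mpr fun i => by
      have := hMd' i; linarith)
    have hdiag : ∀ i, M' i i = (s - δ) - 1 := by
      intro i
      simp only [hM', Matrix.add_apply, Matrix.diagonal_apply_eq]
      ring
    have hedge : ∀ i j, G.Adj i j → M' i j ≤ -1 := by
      intro i j h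
      have hne : i ≠ j := G.ne_of_adj h
      have h2 := hMe i j h
      rw [show X i j = -1 by simp [hX, hne, h]] at h2
      simpa only [hM', Matrix.add_apply, Matrix.diagonal_apply_ne _ hne, add_zero] using h2
    obtain ⟨p, hp⟩ := psd_exists_gram hM'psd
    have hmem : (s - δ) ∈ colS G := ⟨h1le, _, p, fun i => by rw [hp]; exact hdiag i,
      fun i j h => by rw [hp]; exact hedge i j h⟩
    have hle : s ≤ s - δ := by
      conv_lhs => rw [hsdef, vecChrom_eq_sInf]
      exact csInf_le (colS_bddBelow G) hmem
    linarith
  obtain ⟨f, hf⟩ := geometric_hahn_banach_open_point (hUconv.interior) isOpen_interior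
    (fun h => hXnot (interior_subset h))
  have hJint : allOnes α ∈ interior U := by
    have := hint 0 hzero 1 one_pos
    simpa using this
  have hle : ∀ A ∈ U, f A ≤ f X := by
    intro A hA
    refine aux_lt_bound (w := f (allOnes α)) fun t ht => ?_
    have := hf _ (hint A hA t ht)
    rwa [map_add, _root_.map_smul, smul_eq_mul] at this
  have hfX0 : 0 ≤ f X := by
    have := hle 0 hzero
    rwa [map_zero] at this
  set c : α → α → ℝ := fun i j => f (Matrix.single i j 1) with hcdef
  have hexp : ∀ A : Matrix α α ℝ, f A = ∑ i, ∑ j, A i j * c i j := by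
    intro A
    conv_lhs => rw [Matrix.matrix_eq_sum_single A]
    rw [map_sum]
    refine Finset.sum_congr rfl fun i _ => ?_
    rw [map_sum]
    refine Finset.sum_congr rfl fun j _ => ?_
    have : Matrix.single i j (A i j) = A i j • Matrix.single i j 1 := by
      rw [Matrix.smul_single, smul_eq_mul, mul_one]
    rw [this, _root_.map_smul, smul_eq_mul, hcdef]
  have hstdnn : ∀ (i j k l : α), (0:ℝ) ≤ Matrix.single i j (1:ℝ) k l := by
    intro i j k l
    simp only [Matrix.single, Matrix.of_apply]
    split_ifs <;> norm_num
  have hcnonpos : ∀ i j, c i j ≤ 0 := by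
    intro i j
    refine aux_le_zero hfX0 fun t ht => ?_
    have hmemU : t • Matrix.single i j 1 ∈ U := by
      refine hup 0 hzero _ fun k l => ?_
      simp only [Matrix.zero_apply, Matrix.smul_apply, smul_eq_mul]
      exact mul_nonneg ht.le (hstdnn i j k l)
    have := hle _ hmemU
    rwa [_root_.map_smul, smul_eq_mul] at this
  have hczero : ∀ i j, i ≠ j → ¬ G.Adj i j → c i j = 0 := by
    intro i j hne hna
    refine le_antisymm (hcnonpos i j) ?_
    have h2 : ∀ t : ℝ, 0 < t → t * (-c i j) ≤ f X := by
      intro t ht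
      have hmemU : -(t • Matrix.single i j 1) ∈ U := by
        refine ⟨0, Matrix.PosSemidef.zero, fun k => ?_, fun k l h => ?_⟩
        · have hz : Matrix.single i j (1:ℝ) k k = 0 :=
            Matrix.single_apply_of_ne _ _ _ _ _
              (fun hh => hne (hh.1.trans hh.2.symm))
          simp only [Matrix.zero_apply, Matrix.neg_apply, Matrix.smul_apply, smul_eq_mul, hz,
            mul_zero, neg_zero, le_refl]
        · have hz : Matrix.single i j (1:ℝ) k l = 0 :=
            Matrix.single_apply_of_ne _ _ _ _ _
              (fun hh => hna (hh.1 ▸ hh.2 ▸ h))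
          simp only [Matrix.zero_apply, Matrix.neg_apply, Matrix.smul_apply, smul_eq_mul, hz,
            mul_zero, neg_zero, le_refl]
      have := hle _ hmemU
      rw [map_neg, _root_.map_smul, smul_eq_mul] at this
      nlinarith
    have := aux_le_zero hfX0 h2
    linarith
  have hpsdle : ∀ M : Matrix α α ℝ, M.PosSemidef → f M ≤ 0 := by
    intro M hM
    refine aux_le_zero hfX0 fun t ht => ?_
    have hmemU : t • M ∈ U := ⟨t • M, psd_smul ht.le hM, fun i => le_refl _,
      fun i j _ => le_refl _⟩
    have := hle _ hmemU
    rwa [_root_.map_smul, smul_eq_mul] at this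
  -- symmetrized nonnegative weights
  set y : α → α → ℝ := fun i j => -c i j with hydef
  have hynn : ∀ i j, 0 ≤ y i j := fun i j => by simp [hydef]; exact hcnonpos i j
  set B₀ : Matrix α α ℝ := Matrix.of fun i j => y i j + y j i with hB₀
  have hB₀psd : B₀.PosSemidef := by
    refine posSemidef_of_quad (fun i j => by simp only [hB₀, Matrix.of_apply]; ring) fun x => ?_
    set M₂ : Matrix α α ℝ := Matrix.of fun i j => x i * x j with hM₂
    have hM₂psd : M₂.PosSemidef := by
      refine posSemidef_of_quad (fun i j => by simp only [hM₂, Matrix.of_apply]; ring) fun z => ?_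
      have : ∑ i, ∑ j, M₂ i j * z i * z j = (∑ i, x i * z i)^2 := by
        rw [sq, Finset.sum_mul_sum]
        exact Finset.sum_congr rfl fun i _ => Finset.sum_congr rfl fun j _ => by
          simp only [hM₂, Matrix.of_apply]; ring
      rw [this]; positivity
    have hfM₂ : f M₂ ≤ 0 := hpsdle M₂ hM₂psd
    have he1 : ∑ i, ∑ j, B₀ i j * x i * x j
        = (∑ i, ∑ j, y i j * x i * x j) + ∑ i, ∑ j, y j i * x i * x j := by
      rw [← Finset.sum_add_distrib]
      refine Finset.sum_congr rfl fun i _ => ?_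
      rw [← Finset.sum_add_distrib]
      exact Finset.sum_congr rfl fun j _ => by simp only [hB₀, Matrix.of_apply]; ring
    have he2 : ∑ i, ∑ j, y i j * x i * x j = -f M₂ := by
      rw [hexp M₂, ← Finset.sum_neg_distrib]
      refine Finset.sum_congr rfl fun i _ => ?_
      rw [← Finset.sum_neg_distrib]
      exact Finset.sum_congr rfl fun j _ => by
        simp only [hM₂, Matrix.of_apply, hydef]; ring
    have he3 : ∑ i, ∑ j, y j i * x i * x j = -f M₂ := by
      rw [hexp M₂]
      calc ∑ i, ∑ j, y j i * x i * x j = ∑ j, ∑ i, y j i * x i * x j := Finset.sum_comm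
        _ = -∑ i, ∑ j, M₂ i j * c i j := by
            rw [← Finset.sum_neg_distrib]
            refine Finset.sum_congr rfl fun i _ => ?_
            rw [← Finset.sum_neg_distrib]
            exact Finset.sum_congr rfl fun j _ => by
              simp only [hM₂, Matrix.of_apply, hydef]; ring
    rw [he1, he2, he3]
    linarith
  -- the inequality from f X >= 0
  set Sd : ℝ := ∑ i, y i i with hSddef
  set Se : ℝ := ∑ i, ∑ j ∈ Finset.univ.erase i, (if G.Adj i j then y i j else 0) with hSedef
  have hXval : f X = -(s - 1 - δ) * Sd + Se := by
    rw [hexp X, sum_split (fun i j => X i j * c i j)]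
    have hd : ∑ i, X i i * c i i = -(s - 1 - δ) * Sd := by
      rw [hSddef, Finset.mul_sum]
      refine Finset.sum_congr rfl fun i _ => ?_
      simp only [hX, Matrix.of_apply, eq_self_iff_true, if_true, hydef]
      ring
    have ho : ∑ i, ∑ j ∈ Finset.univ.erase i, X i j * c i j = Se := by
      rw [hSedef]
      refine Finset.sum_congr rfl fun i _ => Finset.sum_congr rfl fun j hj => ?_
      have hne : i ≠ j := (Finset.ne_of_mem_erase hj).symm
      by_cases hadj : G.Adj i j
      · simp only [hX, Matrix.of_apply, if_neg hne, if_pos hadj, hydef]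
        ring
      · simp only [hX, Matrix.of_apply, if_neg hne, if_neg hadj, hydef, zero_mul,
          if_neg hadj]
    rw [hd, ho]
  have hSe_ge : (s - 1 - δ) * Sd ≤ Se := by
    have := hfX0
    rw [hXval] at this
    linarith
  have hSd0 : 0 ≤ Sd := Finset.sum_nonneg fun i _ => hynn i i
  have hyoff : ∑ i, ∑ j ∈ Finset.univ.erase i, y i j = Se := by
    rw [hSedef]
    refine Finset.sum_congr rfl fun i _ => Finset.sum_congr rfl fun j hj => ?_
    by_cases hadj : G.Adj i j
    · rw [if_pos hadj]
    · rw [if_neg hadj, hydef]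
      simp only
      rw [hczero i j (Finset.ne_of_mem_erase hj).symm hadj, neg_zero]
  have hB₀off : ∑ i, ∑ j ∈ Finset.univ.erase i, B₀ i j = 2 * Se := by
    have h1 : ∑ i, ∑ j ∈ Finset.univ.erase i, B₀ i j
        = (∑ i, ∑ j ∈ Finset.univ.erase i, y i j)
          + ∑ i, ∑ j ∈ Finset.univ.erase i, y j i := by
      rw [← Finset.sum_add_distrib]
      refine Finset.sum_congr rfl fun i _ => ?_
      rw [← Finset.sum_add_distrib]
      exact Finset.sum_congr rfl fun j _ => by simp only [hB₀, Matrix.of_apply]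
    rw [h1, ← sum_erase_swap (fun i j => y i j), hyoff]
    ring
  have hSdpos : 0 < Sd := by
    rcases lt_or_eq_of_le hSd0 with h | h
    · exact h
    · exfalso
      have hdiag0 : ∀ i, y i i = 0 := by
        intro i
        have := (Finset.sum_eq_zero_iff_of_nonneg (fun i _ => hynn i i)).mp h.symm
        exact this i (Finset.mem_univ i)
      have hB₀diag : ∀ i, B₀ i i = 0 := fun i => by
        simp only [hB₀, Matrix.of_apply, hdiag0 i, add_zero]
      have hB₀all : ∀ i j, B₀ i j = 0 := by
        intro i j
        have hb := psd_entry_bound hB₀psd i j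
        rw [hB₀diag i, hB₀diag j] at hb
        have : |B₀ i j| ≤ 0 := by linarith
        exact abs_nonpos_iff.mp this
      have hy0 : ∀ i j, y i j = 0 := by
        intro i j
        have := hB₀all i j
        simp only [hB₀, Matrix.of_apply] at this
        have h1 := hynn i j
        have h2 := hynn j i
        linarith
      have hc0 : ∀ i j, c i j = 0 := by
        intro i j
        have := hy0 i j
        simp only [hydef] at this
        linarith
      have h1 : f (allOnes α) = 0 := by
        rw [hexp]
        exact Finset.sum_eq_zero fun i _ => Finset.sum_eq_zero fun j _ => by
          rw [hc0 i j, mul_zero]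
      have h2 : f X = 0 := by
        rw [hexp]
        exact Finset.sum_eq_zero fun i _ => Finset.sum_eq_zero fun j _ => by
          rw [hc0 i j, mul_zero]
      have := hf _ hJint
      rw [h1, h2] at this
      exact lt_irrefl _ this
  refine ⟨(2 * Sd)⁻¹ • B₀, ⟨psd_smul (by positivity) hB₀psd, ?_, ?_, ?_⟩, ?_⟩
  · intro i j hne hna
    have hy1 : y i j = 0 := by
      simp only [hydef]; rw [hczero i j hne hna, neg_zero]
    have hy2 : y j i = 0 := by
      simp only [hydef]
      rw [hczero j i hne.symm (fun h => hna h.symm), neg_zero]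
    simp only [Matrix.smul_apply, hB₀, Matrix.of_apply, hy1, hy2, smul_eq_mul]
    ring
  · intro i j
    simp only [Matrix.smul_apply, hB₀, Matrix.of_apply, smul_eq_mul]
    have := hynn i j
    have := hynn j i
    positivity
  · rw [trace_eq]
    have hSdne : Sd ≠ 0 := ne_of_gt hSdpos
    have h4 : ∀ i, ((2 * Sd)⁻¹ • B₀) i i = (2 * Sd)⁻¹ * (2 * y i i) := by
      intro i
      rw [Matrix.smul_apply, smul_eq_mul]
      simp only [hB₀, Matrix.of_apply]
      ring
    rw [Finset.sum_congr rfl fun i _ => h4 i, ← Finset.mul_sum]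
    have h5 : ∑ i, 2 * y i i = 2 * Sd := by
      rw [hSddef, Finset.mul_sum]
    rw [h5]
    field_simp
  · have hsum : ∑ i, ∑ j, ((2 * Sd)⁻¹ • B₀) i j = (2 * Sd)⁻¹ * (2 * Sd + 2 * Se) := by
      have h1 : ∑ i, ∑ j, ((2 * Sd)⁻¹ • B₀) i j = (2 * Sd)⁻¹ * ∑ i, ∑ j, B₀ i j := by
        rw [Finset.mul_sum Finset.univ _ ((2 * Sd)⁻¹)]
        refine Finset.sum_congr rfl fun i _ => ?_
        rw [Finset.mul_sum Finset.univ _ ((2 * Sd)⁻¹)]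
        refine Finset.sum_congr rfl fun j _ => ?_
        rw [Matrix.smul_apply, smul_eq_mul]
      have h2 : ∑ i, ∑ j, B₀ i j = 2 * Sd + 2 * Se := by
        rw [sum_split (fun i j => B₀ i j)]
        rw [hB₀off]
        have h3 : ∑ i, B₀ i i = 2 * Sd := by
          rw [hSddef, Finset.mul_sum]
          exact Finset.sum_congr rfl fun i _ => by
            simp only [hB₀, Matrix.of_apply]; ring
        rw [h3]
      rw [h1, h2]
    rw [hsum]
    have hkey : (2*Sd)⁻¹ * (2*Sd + 2*((s-1-δ)*Sd)) = s - δ := by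
      have hSdne : Sd ≠ 0 := ne_of_gt hSdpos
      field_simp
      ring
    have hmono : (2*Sd)⁻¹ * (2*Sd + 2*((s-1-δ)*Sd)) ≤ (2*Sd)⁻¹ * (2*Sd + 2*Se) :=
      mul_le_mul_of_nonneg_left (by linarith) (by positivity)
    linarith

private lemma exists_opt_dual [Fintype α] [DecidableEq α] {G : SimpleGraph α}
    (hs : 1 < vecChrom G) :
    ∃ B, IsDualSol G B ∧ ∑ i, ∑ j, B i j = vecChrom G := by
  classical
  set s := vecChrom G with hsdef
  set D : Set (Matrix α α ℝ) := {B | IsDualSol G B} with hD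
  -- D is nonempty
  have hDne : D.Nonempty := by
    obtain ⟨B, hB, _⟩ := exists_near_dual (G := G) (δ := (s-1)/2) (by linarith) (by linarith)
    exact ⟨B, hB⟩
  -- D is bounded: entries in [0,1]
  have hDbd : ∀ B ∈ D, ∀ i j : α, B i j ∈ Set.Icc (0:ℝ) 1 := by
    rintro B ⟨hpsd, hsupp, hnn, htr⟩ i j
    have htr' : ∑ i, B i i = 1 := by rw [← trace_eq]; exact htr
    have hle1 : ∀ k, B k k ≤ 1 := by
      intro k
      rw [← htr']
      exact Finset.single_le_sum (fun l _ => psd_diag_nonneg hpsd l) (Finset.mem_univ k)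
    have hb := psd_entry_bound hpsd i j
    rw [abs_le] at hb
    exact ⟨hnn i j, by nlinarith [hle1 i, hle1 j]⟩
  -- D is closed
  have contM : ∀ i j : α, Continuous fun A : Matrix α α ℝ => A i j := fun i j =>
    (continuous_apply j).comp (continuous_apply i)
  have hDclosed : IsClosed D := by
    have he : D = ({B : Matrix α α ℝ | ∀ i j, B i j = B j i}
        ∩ {B : Matrix α α ℝ | ∀ x : α → ℝ, 0 ≤ ∑ i, ∑ j, B i j * x i * x j})
        ∩ ({B : Matrix α α ℝ | ∀ i j, i ≠ j → ¬ G.Adj i j → B i j = 0}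
        ∩ ({B : Matrix α α ℝ | ∀ i j, 0 ≤ B i j} ∩ {B : Matrix α α ℝ | ∑ i, B i i = 1})) := by
      ext B
      simp only [hD, Set.mem_inter_iff, Set.mem_setOf_eq, IsDualSol]
      constructor
      · rintro ⟨h1, h2, h3, h4⟩
        exact ⟨⟨fun i j => psd_symm h1.1 i j, psd_quad h1⟩, h2, h3, by rw [← trace_eq]; exact h4⟩
      · rintro ⟨⟨h1a, h1b⟩, h2, h3, h4⟩
        exact ⟨posSemidef_of_quad h1a h1b, h2, h3, by rw [trace_eq]; exact h4⟩
    rw [he]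
    refine IsClosed.inter (IsClosed.inter ?_ ?_) (IsClosed.inter ?_ (IsClosed.inter ?_ ?_))
    · have : {B : Matrix α α ℝ | ∀ i j, B i j = B j i}
          = ⋂ i, ⋂ j, {B : Matrix α α ℝ | B i j = B j i} := by ext B; simp
      rw [this]
      exact isClosed_iInter fun i => isClosed_iInter fun j =>
        isClosed_eq (contM i j) (contM j i)
    · have : {B : Matrix α α ℝ | ∀ x : α → ℝ, 0 ≤ ∑ i, ∑ j, B i j * x i * x j}
          = ⋂ x : α → ℝ, {B : Matrix α α ℝ | 0 ≤ ∑ i, ∑ j, B i j * x i * x j} := by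
        ext B; simp
      rw [this]
      refine isClosed_iInter fun x => isClosed_le continuous_const ?_
      exact continuous_finset_sum _ fun i _ => continuous_finset_sum _ fun j _ =>
        ((contM i j).mul continuous_const).mul continuous_const
    · have : {B : Matrix α α ℝ | ∀ i j, i ≠ j → ¬ G.Adj i j → B i j = 0}
          = ⋂ i, ⋂ j, {B : Matrix α α ℝ | i ≠ j → ¬ G.Adj i j → B i j = 0} := by ext B; simp
      rw [this]
      refine isClosed_iInter fun i => isClosed_iInter fun j => ?_
      by_cases hcond : i ≠ j ∧ ¬ G.Adj i j
      · have : {B : Matrix α α ℝ | i ≠ j → ¬ G.Adj i j → B i j = 0}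
            = {B : Matrix α α ℝ | B i j = 0} := by ext B; simp [hcond.1, hcond.2]
        rw [this]
        exact isClosed_eq (contM i j) continuous_const
      · have : {B : Matrix α α ℝ | i ≠ j → ¬ G.Adj i j → B i j = 0} = Set.univ := by
          ext B
          simp only [Set.mem_setOf_eq, Set.mem_univ, iff_true]
          intro h1 h2
          exact absurd ⟨h1, h2⟩ hcond
        rw [this]
        exact isClosed_univ
    · have : {B : Matrix α α ℝ | ∀ i j, 0 ≤ B i j}
          = ⋂ i, ⋂ j, {B : Matrix α α ℝ | 0 ≤ B i j} := by ext B; simp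
      rw [this]
      exact isClosed_iInter fun i => isClosed_iInter fun j =>
        isClosed_le continuous_const (contM i j)
    · exact isClosed_eq (continuous_finset_sum _ fun i _ => contM i i) continuous_const
  -- D compact
  have hDcpt : IsCompact D := by
    have hBox : IsCompact (Set.univ.pi fun _ : α => Set.univ.pi fun _ : α =>
        Set.Icc (0:ℝ) 1) :=
      isCompact_univ_pi fun i => isCompact_univ_pi fun j => isCompact_Icc
    refine hBox.of_isClosed_subset hDclosed ?_
    intro B hB
    exact fun i _ j _ => hDbd B hB i j
  -- maximize the sum
  have hcont : ContinuousOn (fun B : Matrix α α ℝ => ∑ i, ∑ j, B i j) D :=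
    (continuous_finset_sum _ fun i _ => continuous_finset_sum _ fun j _ => contM i j).continuousOn
  obtain ⟨B, hBmem, hBmax⟩ := hDcpt.exists_isMaxOn hDne hcont
  refine ⟨B, hBmem, le_antisymm ?_ ?_⟩
  · -- weak duality using the optimal coloring
    obtain ⟨_, d, p, hp⟩ := vecChrom_mem_colS G
    exact weak_duality hBmem hp
  · by_contra hlt
    push_neg at hlt
    set v := ∑ i, ∑ j, B i j with hv
    set δ := min ((s - v)/2) ((s-1)/2) with hδdef
    have hδpos : 0 < δ := by
      apply lt_min
      · linarith
      · linarith
    have hδlt : δ < s - 1 := by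
      have : δ ≤ (s-1)/2 := min_le_right _ _
      linarith
    obtain ⟨B', hB', hB'val⟩ := exists_near_dual (G := G) hδpos hδlt
    have h1 : ∑ i, ∑ j, B' i j ≤ v := hBmax hB'
    have h2 : δ ≤ (s - v)/2 := min_le_left _ _
    have : s - δ ≥ s - (s-v)/2 := by linarith
    linarith

private lemma opt_dual_psd [Fintype α] [DecidableEq α] {G : SimpleGraph α} {B : Matrix α α ℝ}
    (hB : IsDualSol G B) (hBv : ∑ i, ∑ j, B i j = vecChrom G)
    {d : ℕ} {p : α → Fin d → ℝ} (hp : IsVecColoring G (vecChrom G) p) :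
    (vecChrom G • Matrix.diagonal (fun i => B i i) - B).PosSemidef := by
  classical
  obtain ⟨hpsd, hsupp, hnn, htr⟩ := hB
  set s := vecChrom G with hsdef
  have htr' : ∑ i, B i i = 1 := by rw [← trace_eq]; exact htr
  have h0 : 0 ≤ ∑ i, ∑ j, B i j * (p i ⬝ᵥ p j) := psd_inner_gram_nonneg hpsd p
  have hsplit := sum_split (fun i j => B i j * (p i ⬝ᵥ p j))
  have hsplitB := sum_split (fun i j => B i j)
  have hdiag : ∑ i, B i i * (p i ⬝ᵥ p i) = s - 1 := by
    have h1 : ∀ i ∈ Finset.univ, B i i * (p i ⬝ᵥ p i) = B i i * (s - 1) := fun i _ => by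
      rw [hp.1 i]
    rw [Finset.sum_congr rfl h1, ← Finset.sum_mul, htr', one_mul]
  have hterm : ∀ i, ∀ j ∈ Finset.univ.erase i, B i j * (p i ⬝ᵥ p j) + B i j ≤ 0 := by
    intro i j hj
    have hne : j ≠ i := Finset.ne_of_mem_erase hj
    rcases eq_or_ne (B i j) 0 with h | h
    · simp [h]
    · have hadj : G.Adj i j := by
        by_contra hna
        exact h (hsupp i j (Ne.symm hne) hna)
      have h2 := hp.2 i j hadj
      nlinarith [hnn i j]
  have hoffB : ∑ i, ∑ j ∈ Finset.univ.erase i, B i j = s - 1 := by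
    have := hsplitB
    rw [hBv] at this
    linarith [htr']
  have hzero : ∑ i, ∑ j ∈ Finset.univ.erase i, (B i j * (p i ⬝ᵥ p j) + B i j) = 0 := by
    have hle : ∑ i, ∑ j ∈ Finset.univ.erase i, (B i j * (p i ⬝ᵥ p j) + B i j) ≤ 0 :=
      Finset.sum_nonpos fun i _ => Finset.sum_nonpos fun j hj => hterm i j hj
    have hsum_eq : ∑ i, ∑ j ∈ Finset.univ.erase i, (B i j * (p i ⬝ᵥ p j) + B i j)
        = (∑ i, ∑ j ∈ Finset.univ.erase i, B i j * (p i ⬝ᵥ p j))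
          + ∑ i, ∑ j ∈ Finset.univ.erase i, B i j := by
      rw [← Finset.sum_add_distrib]
      exact Finset.sum_congr rfl fun i _ => Finset.sum_add_distrib
    have hge : 0 ≤ ∑ i, ∑ j ∈ Finset.univ.erase i, (B i j * (p i ⬝ᵥ p j) + B i j) := by
      rw [hsum_eq, hoffB]
      linarith
    linarith
  have heach : ∀ i, ∀ j, i ≠ j → B i j * (p i ⬝ᵥ p j) + B i j = 0 := by
    intro i j hne
    have h1 := (Finset.sum_eq_zero_iff_of_nonpos
      (fun i _ => Finset.sum_nonpos fun j hj => hterm i j hj)).mp hzero i (Finset.mem_univ i)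
    have h2 := (Finset.sum_eq_zero_iff_of_nonpos (fun j hj => hterm i j hj)).mp h1 j
      (Finset.mem_erase.mpr ⟨hne.symm, Finset.mem_univ j⟩)
    exact h2
  have hMpsd : (Matrix.of fun i j => p i ⬝ᵥ p j : Matrix α α ℝ).PosSemidef := gram_posSemidef p
  have hhad := schur_psd hpsd hMpsd
  have heq : (s • Matrix.diagonal (fun i => B i i) - B)
      = Matrix.of fun i j => B i j * ((Matrix.of fun i j => p i ⬝ᵥ p j : Matrix α α ℝ) i j) := by
    ext i j
    rcases eq_or_ne i j with rfl | hne
    · simp only [Matrix.sub_apply, Matrix.smul_apply, Matrix.diagonal_apply_eq, smul_eq_mul,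
        Matrix.of_apply, hp.1 i]
      ring
    · have := heach i j hne
      simp only [Matrix.sub_apply, Matrix.smul_apply, Matrix.diagonal_apply_ne _ hne,
        smul_eq_mul, mul_zero, zero_sub, Matrix.of_apply]
      linarith
  rw [heq]
  exact hhad

private lemma lemmaF [Fintype α] [Fintype β] {D X : Matrix α α ℝ} {E Y : Matrix β β ℝ}
    {a b : ℝ} (ha : 0 ≤ a) (hb : 0 ≤ b)
    (h1 : (D + X).PosSemidef) (h2 : (a • D - X).PosSemidef)
    (h3 : (E + Y).PosSemidef) (h4 : (b • E - Y).PosSemidef) :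
    (max a b • (D ⊗ₖ E) + X ⊗ₖ Y).PosSemidef := by
  set c := max a b with hc
  have hca : a ≤ c := le_max_left a b
  have hcb : b ≤ c := le_max_right a b
  have hc0 : 0 ≤ c := ha.trans hca
  have hiden : ((1+a)*(1+b)) • (c • (D ⊗ₖ E) + X ⊗ₖ Y)
      = (c+1) • ((a • D - X) ⊗ₖ (b • E - Y))
        + ((c-b) • ((a • D - X) ⊗ₖ (E + Y))
        + ((c-a) • ((D + X) ⊗ₖ (b • E - Y))
        + (c+a*b) • ((D + X) ⊗ₖ (E + Y)))) := by
    ext u v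
    simp only [Matrix.add_apply, Matrix.smul_apply, Matrix.sub_apply, Matrix.kroneckerMap_apply,
      smul_eq_mul]
    ring
  have hpsd : (((1+a)*(1+b)) • (c • (D ⊗ₖ E) + X ⊗ₖ Y)).PosSemidef := by
    rw [hiden]
    refine ((psd_smul (by linarith) (kron_psd h2 h4)).add
      ((psd_smul (by linarith) (kron_psd h2 h3)).add
      ((psd_smul (by linarith) (kron_psd h1 h4)).add
      (psd_smul (by nlinarith) (kron_psd h1 h3)))))
  have hpos : (0:ℝ) < (1+a)*(1+b) := by nlinarith
  have : c • (D ⊗ₖ E) + X ⊗ₖ Y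
      = ((1+a)*(1+b))⁻¹ • (((1+a)*(1+b)) • (c • (D ⊗ₖ E) + X ⊗ₖ Y)) := by
    rw [smul_smul, inv_mul_cancel₀ (ne_of_gt hpos), one_smul]
  rw [this]
  exact psd_smul (by positivity) hpsd

private lemma sum2_add {γ : Type*} [Fintype γ] (F G : γ → γ → ℝ) :
    ∑ i, ∑ j, (F i j + G i j) = (∑ i, ∑ j, F i j) + (∑ i, ∑ j, G i j) := by
  rw [← Finset.sum_add_distrib]
  exact Finset.sum_congr rfl fun i _ => Finset.sum_add_distrib

private lemma sum2_mul {γ : Type*} [Fintype γ] (t : ℝ) (F : γ → γ → ℝ) :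
    ∑ i, ∑ j, t * F i j = t * ∑ i, ∑ j, F i j := by
  rw [Finset.mul_sum Finset.univ _ t]
  exact Finset.sum_congr rfl fun i _ => (Finset.mul_sum Finset.univ _ t).symm

private lemma sum_kron [Fintype α] [Fintype β] (X : Matrix α α ℝ) (Y : Matrix β β ℝ) :
    ∑ u, ∑ v, (X ⊗ₖ Y) u v = (∑ i, ∑ j, X i j) * (∑ l, ∑ k, Y l k) := by
  simp only [Fintype.sum_prod_type, Matrix.kroneckerMap_apply]
  rw [Finset.sum_mul_sum]
  exact Finset.sum_congr rfl fun i _ => Finset.sum_congr rfl fun l _ =>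
    (Finset.sum_mul_sum _ _ _ _).symm

private lemma sum_sum_diagonal [Fintype α] [DecidableEq α] (f : α → ℝ) :
    ∑ i, ∑ j, Matrix.diagonal f i j = ∑ i, f i := by
  refine Finset.sum_congr rfl fun i _ => ?_
  rw [Finset.sum_eq_single i (fun j _ hj => Matrix.diagonal_apply_ne' f hj)
    (fun h => absurd (Finset.mem_univ i) h)]
  exact Matrix.diagonal_apply_eq f i

private lemma hard_direction [Fintype α] [Fintype β] (G : SimpleGraph α) (H : SimpleGraph β) :
    min (vecChrom G) (vecChrom H) ≤ vecChrom (catProd G H) := by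
  classical
  set s := vecChrom G with hsdef
  set r := vecChrom H with hrdef
  rcases le_or_gt s 1 with hG1 | hG1
  · exact le_trans (le_trans (min_le_left s r) hG1) (one_le_vecChrom _)
  rcases le_or_gt r 1 with hH1 | hH1
  · exact le_trans (le_trans (min_le_right s r) hH1) (one_le_vecChrom _)
  obtain ⟨BG, hBG, hBGv⟩ := exists_opt_dual (G := G) hG1
  obtain ⟨BH, hBH, hBHv⟩ := exists_opt_dual (G := H) hH1
  obtain ⟨_, dG, pG, hpG⟩ := vecChrom_mem_colS G
  obtain ⟨_, dH, pH, hpH⟩ := vecChrom_mem_colS H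
  have hLG := opt_dual_psd hBG hBGv hpG
  have hLH := opt_dual_psd hBH hBHv hpH
  set DB := Matrix.diagonal (fun i => BG i i) with hDB
  set AB := BG - DB with hAB
  set DC := Matrix.diagonal (fun l => BH l l) with hDC
  set AC := BH - DC with hAC
  set a := s - 1 with ha
  set b := r - 1 with hb
  set c := max a b with hc
  have ha0 : 0 < a := by simp only [ha]; linarith
  have hb0 : 0 < b := by simp only [hb]; linarith
  have hc0 : 0 < c := lt_of_lt_of_le ha0 (le_max_left a b)
  have hcne : c ≠ 0 := ne_of_gt hc0
  -- entry facts
  have hABdiag : ∀ i, AB i i = 0 := fun i => by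
    simp [hAB, hDB, Matrix.sub_apply, Matrix.diagonal_apply_eq]
  have hABoff : ∀ i j, i ≠ j → AB i j = BG i j := fun i j hne => by
    simp [hAB, hDB, Matrix.sub_apply, Matrix.diagonal_apply_ne _ hne]
  have hACdiag : ∀ l, AC l l = 0 := fun l => by
    simp [hAC, hDC, Matrix.sub_apply, Matrix.diagonal_apply_eq]
  have hACoff : ∀ l k, l ≠ k → AC l k = BH l k := fun l k hne => by
    simp [hAC, hDC, Matrix.sub_apply, Matrix.diagonal_apply_ne _ hne]
  have hABnn : ∀ i j, 0 ≤ AB i j := by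
    intro i j
    rcases eq_or_ne i j with rfl | hne
    · rw [hABdiag i]
    · rw [hABoff i j hne]; exact hBG.2.2.1 i j
  have hACnn : ∀ l k, 0 ≤ AC l k := by
    intro l k
    rcases eq_or_ne l k with rfl | hne
    · rw [hACdiag l]
    · rw [hACoff l k hne]; exact hBH.2.2.1 l k
  have hDBnn : ∀ i j, 0 ≤ DB i j := by
    intro i j
    rcases eq_or_ne i j with rfl | hne
    · rw [hDB, Matrix.diagonal_apply_eq]; exact hBG.2.2.1 i i
    · rw [hDB, Matrix.diagonal_apply_ne _ hne]
  have hDCnn : ∀ l k, 0 ≤ DC l k := by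
    intro l k
    rcases eq_or_ne l k with rfl | hne
    · rw [hDC, Matrix.diagonal_apply_eq]; exact hBH.2.2.1 l l
    · rw [hDC, Matrix.diagonal_apply_ne _ hne]
  -- PSD inputs for lemmaF
  have h1 : (DB + AB).PosSemidef := by
    rw [hAB, add_sub_cancel]
    exact hBG.1
  have h2 : (a • DB - AB).PosSemidef := by
    have : a • DB - AB = s • DB - BG := by
      rw [hAB, ha]
      ext i j
      simp only [Matrix.sub_apply, Matrix.smul_apply, smul_eq_mul]
      ring
    rw [this]
    exact hLG
  have h3 : (DC + AC).PosSemidef := by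
    rw [hAC, add_sub_cancel]
    exact hBH.1
  have h4 : (b • DC - AC).PosSemidef := by
    have : b • DC - AC = r • DC - BH := by
      rw [hAC, hb]
      ext l k
      simp only [Matrix.sub_apply, Matrix.smul_apply, smul_eq_mul]
      ring
    rw [this]
    exact hLH
  have hW₀psd : (c • (DB ⊗ₖ DC) + AB ⊗ₖ AC).PosSemidef :=
    lemmaF ha0.le hb0.le h1 h2 h3 h4
  set W : Matrix (α × β) (α × β) ℝ := c⁻¹ • (c • (DB ⊗ₖ DC) + AB ⊗ₖ AC) with hW
  have hent : ∀ (i j : α) (l k : β),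
      W (i,l) (j,k) = c⁻¹ * (c * (DB i j * DC l k) + AB i j * AC l k) := by
    intro i j l k
    rw [hW]
    simp only [Matrix.smul_apply, Matrix.add_apply, Matrix.kroneckerMap_apply, smul_eq_mul]
  have hWdual : IsDualSol (catProd G H) W := by
    refine ⟨psd_smul (by positivity) hW₀psd, ?_, ?_, ?_⟩
    · rintro ⟨i, l⟩ ⟨j, k⟩ hne hna
      have hna' : ¬ (G.Adj i j ∧ H.Adj l k) := hna
      rw [hent]
      rcases eq_or_ne i j with rfl | hij
      · rcases eq_or_ne l k with rfl | hlk
        · exact absurd rfl hne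
        · rw [hABdiag i, hDC, Matrix.diagonal_apply_ne _ hlk]
          ring
      · rw [hDB, Matrix.diagonal_apply_ne _ hij]
        by_cases hga : G.Adj i j
        · have hgh : ¬ H.Adj l k := fun hh => hna' ⟨hga, hh⟩
          rcases eq_or_ne l k with rfl | hlk
          · rw [hACdiag l]; ring
          · rw [hACoff l k hlk, hBH.2.1 l k hlk hgh]; ring
        · rw [hABoff i j hij, hBG.2.1 i j hij hga]; ring
    · rintro ⟨i, l⟩ ⟨j, k⟩
      rw [hent]
      have := hDBnn i j
      have := hDCnn l k
      have := hABnn i j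
      have := hACnn l k
      positivity
    · rw [trace_eq]
      have hWu : ∀ u : α × β, W u u = BG u.1 u.1 * BH u.2 u.2 := by
        rintro ⟨i, l⟩
        rw [hent, hABdiag i, hDB, hDC, Matrix.diagonal_apply_eq, Matrix.diagonal_apply_eq, zero_mul,
          add_zero]
        field_simp
      rw [Finset.sum_congr rfl fun u _ => hWu u]
      simp only [Fintype.sum_prod_type]
      rw [← Finset.sum_mul_sum]
      have htrG : ∑ i, BG i i = 1 := by rw [← trace_eq]; exact hBG.2.2.2
      have htrH : ∑ l, BH l l = 1 := by rw [← trace_eq]; exact hBH.2.2.2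
      rw [htrG, htrH, one_mul]
  -- the total sum of W
  have hsumAB : ∑ i, ∑ j, AB i j = a := by
    have hsub : ∑ i, ∑ j, AB i j = (∑ i, ∑ j, BG i j) - ∑ i, ∑ j, DB i j := by
      rw [← Finset.sum_sub_distrib]
      refine Finset.sum_congr rfl fun i _ => ?_
      rw [← Finset.sum_sub_distrib]
      exact Finset.sum_congr rfl fun j _ => by rw [hAB, Matrix.sub_apply]
    rw [hsub, hBGv, sum_sum_diagonal]
    have htrG : ∑ i, BG i i = 1 := by rw [← trace_eq]; exact hBG.2.2.2
    rw [htrG, ha]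
  have hsumAC : ∑ l, ∑ k, AC l k = b := by
    have hsub : ∑ l, ∑ k, AC l k = (∑ l, ∑ k, BH l k) - ∑ l, ∑ k, DC l k := by
      rw [← Finset.sum_sub_distrib]
      refine Finset.sum_congr rfl fun l _ => ?_
      rw [← Finset.sum_sub_distrib]
      exact Finset.sum_congr rfl fun k _ => by rw [hAC, Matrix.sub_apply]
    rw [hsub, hBHv, sum_sum_diagonal]
    have htrH : ∑ l, BH l l = 1 := by rw [← trace_eq]; exact hBH.2.2.2
    rw [htrH, hb]
  have hWval : ∑ u, ∑ v, W u v = min s r := by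
    have e1 : ∀ u v : α × β, W u v
        = c⁻¹ * (c * ((DB ⊗ₖ DC) u v)) + c⁻¹ * ((AB ⊗ₖ AC) u v) := by
      intro u v
      rw [hW]
      simp only [Matrix.smul_apply, Matrix.add_apply, smul_eq_mul]
      ring
    have e2 : ∑ u, ∑ v, W u v
        = c⁻¹ * (c * ∑ u, ∑ v, (DB ⊗ₖ DC) u v) + c⁻¹ * ∑ u, ∑ v, (AB ⊗ₖ AC) u v := by
      rw [Finset.sum_congr rfl fun u _ => Finset.sum_congr rfl fun v _ => e1 u v]
      rw [sum2_add (fun u v => c⁻¹ * (c * ((DB ⊗ₖ DC) u v)))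
        (fun u v => c⁻¹ * ((AB ⊗ₖ AC) u v))]
      rw [sum2_mul c⁻¹ (fun u v => c * ((DB ⊗ₖ DC) u v))]
      rw [sum2_mul c (fun u v => (DB ⊗ₖ DC) u v)]
      rw [sum2_mul c⁻¹ (fun u v => (AB ⊗ₖ AC) u v)]
    have htrG : ∑ i, BG i i = 1 := by rw [← trace_eq]; exact hBG.2.2.2
    have htrH : ∑ l, BH l l = 1 := by rw [← trace_eq]; exact hBH.2.2.2
    rw [e2, sum_kron, sum_kron, hsumAB, hsumAC, hDB, hDC, sum_sum_diagonal,
      sum_sum_diagonal, htrG, htrH]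
    have hab : a * b = min a b * c := by
      rw [hc, ← min_mul_max a b]
    have hmin : min s r = 1 + min a b := by
      rw [ha, hb, min_sub_sub_right]
      ring
    rw [hab, hmin]
    field_simp
  refine le_csInf (colS_nonempty (catProd G H)) fun t ht => ?_
  obtain ⟨ht1, d, p, hp⟩ := ht
  have := weak_duality hWdual hp
  rw [hWval] at this
  exact this

end HedetAux

/-- Vector coloring analog of Hedetniemi's conjecture:
`χ_v(G × H) = min {χ_v(G), χ_v(H)}`. -/
theorem vecChrom_catProd {α β : Type*} [Fintype α] [Fintype β]
    (G : SimpleGraph α) (H : SimpleGraph β) :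
    vecChrom (catProd G H) = min (vecChrom G) (vecChrom H) :=
  le_antisymm (easy_direction G H) (hard_direction G H)
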